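/- arXiv:1509.08305 — 8 statements merged into one kernel-verified Lean document; each statement's English description precedes it below -/
import Mathlib

section
/- The function g(x) = ((1+x)/x)·ln(1+x) is strictly increasing on (0, ∞), satisfies lim_{x→0⁺} g(x) = 1, and tends to +∞ as x → ∞. Consequently, for every y > 1 the equation g(x) = y has exactly one solution x > 0. -/
open Real Filter Set
open scoped Topology

private lemma g_hasDeriv (x : ℝ) (hx : 0 < x) :
    HasDerivAt (fun x : ℝ => ((1 + x) / x) * Real.log (1 + x))
      ((x - Real.log (1 + x)) / x ^ 2) x := by
  have hx1 : (0:ℝ) < 1 + x := by linarith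
  have h1 : HasDerivAt (fun y : ℝ => 1 + y) 1 x := by
    simpa using (hasDerivAt_id x).const_add 1
  have hlog : HasDerivAt (fun y : ℝ => Real.log (1 + y)) ((1 + x)⁻¹ * 1) x :=
    (Real.hasDerivAt_log hx1.ne').comp x h1
  have hf : HasDerivAt (fun y : ℝ => (1 + y) * Real.log (1 + y))
      (1 * Real.log (1 + x) + (1 + x) * ((1 + x)⁻¹ * 1)) x := h1.mul hlog
  have hg : HasDerivAt (fun y : ℝ => ((1 + y) * Real.log (1 + y)) / y)
      (((1 * Real.log (1 + x) + (1 + x) * ((1 + x)⁻¹ * 1)) * x -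
        (1 + x) * Real.log (1 + x) * 1) / x ^ 2) x :=
    hf.div (hasDerivAt_id x) hx.ne'
  have heq : (fun y : ℝ => ((1 + y) * Real.log (1 + y)) / y)
      = (fun y : ℝ => ((1 + y) / y) * Real.log (1 + y)) := by
    funext y; ring
  rw [heq] at hg
  convert hg using 1
  field_simp
  ring

private lemma g_contOn :
    ContinuousOn (fun x : ℝ => ((1 + x) / x) * Real.log (1 + x)) (Set.Ioi 0) :=
  fun x hx => ((g_hasDeriv x hx).differentiableAt.continuousAt).continuousWithinAt

private lemma g_strictMono :
    StrictMonoOn (fun x : ℝ => ((1 + x) / x) * Real.log (1 + x)) (Set.Ioi 0) := by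
  apply strictMonoOn_of_deriv_pos (convex_Ioi 0) g_contOn
  intro x hx
  rw [interior_Ioi, Set.mem_Ioi] at hx
  rw [(g_hasDeriv x hx).deriv]
  have h1 : Real.log (1 + x) < x := by
    have := Real.log_lt_sub_one_of_pos (by linarith : (0:ℝ) < 1 + x) (by linarith)
    linarith
  exact div_pos (by linarith) (by positivity)

private lemma g_tendsto_zero :
    Filter.Tendsto (fun x : ℝ => ((1 + x) / x) * Real.log (1 + x))
      (nhdsWithin 0 (Set.Ioi 0)) (nhds 1) := by
  have hd : HasDerivAt (fun y : ℝ => Real.log (1 + y)) 1 0 := by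
    have h1 : HasDerivAt (fun y : ℝ => 1 + y) 1 0 := by
      simpa using (hasDerivAt_id (0:ℝ)).const_add 1
    have := (Real.hasDerivAt_log (by norm_num : (1:ℝ) + 0 ≠ 0)).comp 0 h1
    have e : ((1:ℝ) + 0)⁻¹ * 1 = 1 := by norm_num
    rw [e] at this
    exact this
  have hslope : Tendsto (slope (fun y : ℝ => Real.log (1 + y)) 0) (𝓝[≠] 0) (𝓝 1) :=
    hasDerivAt_iff_tendsto_slope.mp hd
  have hslope' : Tendsto (slope (fun y : ℝ => Real.log (1 + y)) 0) (𝓝[>] 0) (𝓝 1) :=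
    hslope.mono_left (nhdsWithin_mono 0 (fun y hy => ne_of_gt hy))
  have hlin : Tendsto (fun x : ℝ => 1 + x) (𝓝[>] 0) (𝓝 1) := by
    have : Tendsto (fun x : ℝ => 1 + x) (𝓝 0) (𝓝 1) := by
      simpa using (continuous_add_left (1:ℝ)).tendsto (0:ℝ)
    exact this.mono_left nhdsWithin_le_nhds
  have hmul := hlin.mul hslope'
  rw [mul_one] at hmul
  refine hmul.congr' ?_
  filter_upwards [self_mem_nhdsWithin] with x hx
  have hx' : (x:ℝ) ≠ 0 := ne_of_gt hx
  rw [slope_def_field]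
  field_simp
  simp only [add_zero, Real.log_one, sub_zero]
  ring

private lemma g_tendsto_atTop :
    Filter.Tendsto (fun x : ℝ => ((1 + x) / x) * Real.log (1 + x))
      Filter.atTop Filter.atTop := by
  have hlog : Tendsto (fun x : ℝ => Real.log (1 + x)) atTop atTop :=
    Real.tendsto_log_atTop.comp (tendsto_atTop_add_const_left _ 1 tendsto_id)
  apply tendsto_atTop_mono' _ _ hlog
  filter_upwards [eventually_ge_atTop (1:ℝ)] with x hx
  have hx0 : (0:ℝ) < x := by linarith
  have hl : 0 ≤ Real.log (1 + x) := Real.log_nonneg (by linarith)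
  have h1 : (1:ℝ) ≤ (1 + x) / x := by
    rw [le_div_iff₀ hx0]; linarith
  nlinarith

/-- `g x = ((1+x)/x) · ln (1+x)` is strictly increasing on `(0, ∞)`, tends to `1`
as `x → 0⁺`, tends to `+∞` as `x → ∞`, and hence for every `y > 1` the equation
`g x = y` has exactly one solution `x > 0`. -/
theorem stmt1 :
    StrictMonoOn (fun x : ℝ => ((1 + x) / x) * Real.log (1 + x)) (Set.Ioi 0) ∧
    Filter.Tendsto (fun x : ℝ => ((1 + x) / x) * Real.log (1 + x))
      (nhdsWithin 0 (Set.Ioi 0)) (nhds 1) ∧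
    Filter.Tendsto (fun x : ℝ => ((1 + x) / x) * Real.log (1 + x))
      Filter.atTop Filter.atTop ∧
    ∀ y : ℝ, 1 < y → ∃! x : ℝ, 0 < x ∧ ((1 + x) / x) * Real.log (1 + x) = y := by
  refine ⟨g_strictMono, g_tendsto_zero, g_tendsto_atTop, ?_⟩
  intro y hy
  set g : ℝ → ℝ := fun x => ((1 + x) / x) * Real.log (1 + x) with hg
  -- find a with g a < y
  have ha : ∃ a, 0 < a ∧ g a < y := by
    have h := g_tendsto_zero.eventually (Filter.Tendsto.eventually_lt_const hy tendsto_id)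
    have h2 := h.and self_mem_nhdsWithin
    obtain ⟨a, h1, h2⟩ := h2.exists
    exact ⟨a, h2, h1⟩
  obtain ⟨a, ha0, hay⟩ := ha
  -- find b ≥ a with g b > y
  have hb : ∃ b, a ≤ b ∧ y < g b := by
    have h := (g_tendsto_atTop.eventually_gt_atTop y).and (eventually_ge_atTop a)
    obtain ⟨b, h1, h2⟩ := h.exists
    exact ⟨b, h2, h1⟩
  obtain ⟨b, hab, hby⟩ := hb
  have hsub : Set.Icc a b ⊆ Set.Ioi 0 := fun z hz => lt_of_lt_of_le ha0 hz.1
  have hcont : ContinuousOn g (Set.Icc a b) := g_contOn.mono hsub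
  have hiv := intermediate_value_Icc hab hcont
  have hy_mem : y ∈ Set.Icc (g a) (g b) := ⟨le_of_lt hay, le_of_lt hby⟩
  obtain ⟨x, hx, hgx⟩ := hiv hy_mem
  refine ⟨x, ⟨hsub hx, hgx⟩, ?_⟩
  rintro z ⟨hz0, hgz⟩
  exact g_strictMono.injOn hz0 (hsub hx) (hgz.trans hgx.symm)
end

section
/- Let M, c, K, τ_u > 0 be real constants, X(τ, p) = M·τ/(c·p²·K²), and R(τ, p) = p·K·(τ_u − τ)·log₂(1 + X(τ, p)). If (τ, p) with 0 < τ < τ_u and p > 0 is a stationary point of R (both partial derivatives vanish) with X = X(τ, p) > 0, then ((1 + X)/X)·ln(1 + X) = 2 and τ_u/τ = 1 + ((1 + X)/X)·ln(1 + X) = 3. -/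
/-- At any stationary point `(τ, p)` (with `0 < τ < τ_u`, `p > 0`, `X(τ,p) > 0`) of
`R(τ, p) = p K (τ_u − τ) log₂(1 + X(τ, p))` with `X(τ, p) = M τ / (c p² K²)`,
one has `((1+X)/X) ln(1+X) = 2` and `τ_u/τ = 1 + ((1+X)/X) ln(1+X) = 3`. -/
theorem stmt5 (M c K τu : ℝ) (hM : 0 < M) (hc : 0 < c) (hK : 0 < K) (hτu : 0 < τu)
    (X R : ℝ → ℝ → ℝ)
    (hX : ∀ τ p : ℝ, X τ p = M * τ / (c * p ^ 2 * K ^ 2))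
    (hR : ∀ τ p : ℝ, R τ p = p * K * (τu - τ) * Real.logb 2 (1 + X τ p))
    (τ p : ℝ) (hτ : 0 < τ) (hττu : τ < τu) (hp : 0 < p) (hXpos : 0 < X τ p)
    (hstat1 : deriv (fun t => R t p) τ = 0)
    (hstat2 : deriv (fun q => R τ q) p = 0) :
    ((1 + X τ p) / X τ p) * Real.log (1 + X τ p) = 2 ∧
    τu / τ = 1 + ((1 + X τ p) / X τ p) * Real.log (1 + X τ p) ∧
    τu / τ = 3 := by
  set a : ℝ := M / (c * p ^ 2 * K ^ 2) with ha
  set b : ℝ := M * τ / (c * K ^ 2) with hb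
  have ha_pos : 0 < a := by positivity
  have hXa : X τ p = a * τ := by rw [hX]; ring
  have hXv : 0 < a * τ := hXa ▸ hXpos
  have h1X : (0:ℝ) < 1 + a * τ := by linarith
  have hbp : b * (p ^ 2)⁻¹ = a * τ := by
    rw [hb, ha]; field_simp
  have h1Xb : (0:ℝ) < 1 + b * (p ^ 2)⁻¹ := by rw [hbp]; exact h1X
  have hlog2 : (0:ℝ) < Real.log 2 := Real.log_pos (by norm_num)
  set L : ℝ := Real.log (1 + a * τ) with hL
  -- derivative in τ
  have hfun1 : (fun t => R t p) =
      fun t => p * K * ((τu - t) * Real.log (1 + a * t)) / Real.log 2 := by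
    funext t
    rw [hR, hX, Real.logb, ha]
    have : M * t / (c * p ^ 2 * K ^ 2) = M / (c * p ^ 2 * K ^ 2) * t := by ring
    rw [this]; ring
  have hd1 : HasDerivAt (fun t : ℝ => 1 + a * t) a τ := by
    simpa using ((hasDerivAt_id τ).const_mul a).const_add 1
  have hd2 := hd1.log h1X.ne'
  have hd3 : HasDerivAt (fun t : ℝ => τu - t) (-1) τ := by
    simpa using (hasDerivAt_id τ).const_sub τu
  have hd4 := ((hd3.mul hd2).const_mul (p * K)).div_const (Real.log 2)
  have heq1 : p * K * (-1 * L + (τu - τ) * (a / (1 + a * τ))) / Real.log 2 = 0 := by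
    rw [← hL] at hd4
    rw [hfun1] at hstat1
    exact hd4.deriv.symm.trans hstat1
  -- derivative in p
  have hfun2 : (fun q => R τ q) =
      fun q => K * (τu - τ) * (q * Real.log (1 + b * (q ^ 2)⁻¹)) / Real.log 2 := by
    funext q
    rw [hR, hX, Real.logb, hb]
    have : M * τ / (c * q ^ 2 * K ^ 2) = M * τ / (c * K ^ 2) * (q ^ 2)⁻¹ := by
      rcases eq_or_ne q 0 with h | h
      · simp [h]
      · field_simp
    rw [this]; ring
  have he1 : HasDerivAt (fun q : ℝ => q ^ 2) (2 * p) p := by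
    simpa using hasDerivAt_pow 2 p
  have he2 := he1.inv (pow_ne_zero 2 hp.ne')
  have he3 := ((he2.const_mul b).const_add 1).log h1Xb.ne'
  have he4 := ((hasDerivAt_id' p).mul he3).const_mul (K * (τu - τ))
  have he5 := he4.div_const (Real.log 2)
  have heq2 : K * (τu - τ) * (1 * Real.log (1 + b * (p ^ 2)⁻¹) +
      p * (b * (-(2 * p) / (p ^ 2) ^ 2) / (1 + b * (p ^ 2)⁻¹))) / Real.log 2 = 0 := by
    rw [hfun2] at hstat2
    exact he5.deriv.symm.trans hstat2
  rw [hbp, ← hL] at heq2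
  -- algebra
  have hpK : (0:ℝ) < p * K := by positivity
  have hτd : (0:ℝ) < τu - τ := by linarith
  have hp4 : (0:ℝ) < (p ^ 2) ^ 2 := by positivity
  have key2 : L * (1 + a * τ) = 2 * (a * τ) := by
    have h0 := (div_eq_zero_iff.mp heq2).resolve_right hlog2.ne'
    have h1 : 1 * L + p * (b * (-(2 * p) / (p ^ 2) ^ 2) / (1 + a * τ)) = 0 :=
      (mul_eq_zero.mp h0).resolve_left (by positivity)
    have hbeq : b = a * τ * p ^ 2 := by
      rw [hb, ha]; field_simp
    rw [hbeq] at h1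
    field_simp at h1
    refine mul_right_cancel₀ hp4.ne' ?_
    linear_combination (p ^ 2) ^ 2 * h1
  have key1 : L * (1 + a * τ) = (τu - τ) * a := by
    have h0 := (div_eq_zero_iff.mp heq1).resolve_right hlog2.ne'
    have h1 : -1 * L + (τu - τ) * (a / (1 + a * τ)) = 0 :=
      (mul_eq_zero.mp h0).resolve_left hpK.ne'
    field_simp at h1
    linarith
  have hτu3 : τu = 3 * τ := by
    have h2 : (τu - τ) * a = 2 * (a * τ) := by rw [← key1, key2]
    have := mul_left_cancel₀ ha_pos.ne' (show a * (τu - τ) = a * (2 * τ) by linear_combination h2)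
    linarith
  have goal1 : ((1 + X τ p) / X τ p) * Real.log (1 + X τ p) = 2 := by
    rw [hXa, ← hL, div_mul_eq_mul_div, div_eq_iff hXv.ne']
    linear_combination key2
  refine ⟨goal1, ?_, ?_⟩
  · rw [goal1, hτu3, mul_div_assoc, div_self hτ.ne']
    norm_num
  · rw [hτu3, mul_div_assoc, div_self hτ.ne']
    norm_num
end

section
/- Let M, c, K, τ_u > 0 be real constants, X(τ, p) = M·τ/(c·p²·K²), and R(τ, p) = p·K·(τ_u − τ)·log₂(1 + X(τ, p)). Let s₀ be the unique positive solution of ln(1+x) = 2x/(1+x). Set τ^h = τ_u/3 and p^h = (1/K)·√(τ_u·M/(3·s₀·c)). Then X(τ^h, p^h) = s₀ and both partial derivatives of R vanish at (τ^h, p^h), i.e., (τ^h, p^h) is a stationary point of R. -/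
/-- The heuristic point `τ^h = τ_u/3`, `p^h = (1/K) √(τ_u M/(3 s₀ c))` satisfies
`X(τ^h, p^h) = s₀` and is a stationary point of
`R(τ, p) = p K (τ_u − τ) log₂(1 + X(τ, p))`, where `X(τ, p) = M τ / (c p² K²)`
and `s₀` is the unique positive solution of `ln(1+x) = 2x/(1+x)`. -/
theorem stmt6 (M c K τu : ℝ) (hM : 0 < M) (hc : 0 < c) (hK : 0 < K) (hτu : 0 < τu)
    (s₀ : ℝ) (hs₀pos : 0 < s₀) (hs₀eq : Real.log (1 + s₀) = 2 * s₀ / (1 + s₀))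
    (X R : ℝ → ℝ → ℝ)
    (hX : ∀ τ p : ℝ, X τ p = M * τ / (c * p ^ 2 * K ^ 2))
    (hR : ∀ τ p : ℝ, R τ p = p * K * (τu - τ) * Real.logb 2 (1 + X τ p))
    (τh ph : ℝ) (hτh : τh = τu / 3)
    (hph : ph = (1 / K) * Real.sqrt (τu * M / (3 * s₀ * c))) :
    X τh ph = s₀ ∧
    deriv (fun t => R t ph) τh = 0 ∧
    deriv (fun q => R τh q) ph = 0 := by
  have hs₀ne : s₀ ≠ 0 := ne_of_gt hs₀pos
  have h1s : (0:ℝ) < 1 + s₀ := by linarith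
  have h1sne : (1:ℝ) + s₀ ≠ 0 := ne_of_gt h1s
  have hlog2 : Real.log 2 ≠ 0 := ne_of_gt (Real.log_pos (by norm_num))
  have harg : (0:ℝ) ≤ τu * M / (3 * s₀ * c) := by positivity
  have hph2 : ph ^ 2 = τu * M / (3 * s₀ * c) / K ^ 2 := by
    rw [hph, mul_pow, Real.sq_sqrt harg]
    field_simp
  have hphpos : 0 < ph := by
    rw [hph]
    have : 0 < τu * M / (3 * s₀ * c) := by positivity
    positivity
  have hA : c * ph ^ 2 * K ^ 2 = τu * M / (3 * s₀) := by
    rw [hph2]; field_simp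
  set A : ℝ := c * ph ^ 2 * K ^ 2 with hAdef
  have hApos : 0 < A := by rw [hA]; positivity
  have hXh : X τh ph = s₀ := by
    rw [hX, hτh, ← hAdef, hA]
    field_simp
  refine ⟨hXh, ?_, ?_⟩
  · -- derivative in τ
    have hfun : (fun t => R t ph) =
        fun t => ph * K * (τu - t) * (Real.log (1 + M * t / A) / Real.log 2) := by
      funext t; rw [hR, hX, ← hAdef, Real.logb]
    have hval : 1 + M * τh / A = 1 + s₀ := by
      have := hXh; rw [hX, ← hAdef] at this; rw [this]
    have h1 : HasDerivAt (fun t => 1 + M * t / A) (M / A) τh := by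
      simpa using (((hasDerivAt_id τh).const_mul M).div_const A).const_add 1
    have h2 : HasDerivAt Real.log (1 + s₀)⁻¹ (1 + M * τh / A) := by
      rw [hval]; exact Real.hasDerivAt_log h1sne
    have h3 : HasDerivAt (fun t => Real.log (1 + M * t / A)) ((1 + s₀)⁻¹ * (M / A)) τh := by
      have := h2.comp τh h1; exact this
    have h4 : HasDerivAt (fun t => τu - t) (-1) τh := by
      simpa using (hasDerivAt_id τh).const_sub τu
    have h5 : HasDerivAt (fun t => ph * K * ((τu - t) * (Real.log (1 + M * t / A) / Real.log 2)))
        (ph * K * ((-1) * (Real.log (1 + M * τh / A) / Real.log 2)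
          + (τu - τh) * ((1 + s₀)⁻¹ * (M / A) / Real.log 2))) τh :=
      ((h4.mul (h3.div_const (Real.log 2))).const_mul (ph * K))
    have h6 : deriv (fun t => R t ph) τh =
        ph * K * ((-1) * (Real.log (1 + M * τh / A) / Real.log 2)
          + (τu - τh) * ((1 + s₀)⁻¹ * (M / A) / Real.log 2)) := by
      rw [hfun]
      have : (fun t => ph * K * (τu - t) * (Real.log (1 + M * t / A) / Real.log 2)) =
          fun t => ph * K * ((τu - t) * (Real.log (1 + M * t / A) / Real.log 2)) := by
        funext t; ring
      rw [this]; exact h5.deriv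
    rw [h6, hval, hs₀eq, hA, hτh]
    have hτune : τu ≠ 0 := ne_of_gt hτu
    have hMne : M ≠ 0 := ne_of_gt hM
    field_simp
    ring
  · -- derivative in p
    have hfun : (fun q => R τh q) =
        fun q => q * K * (τu - τh) * (Real.log (1 + M * τh / (c * q ^ 2 * K ^ 2)) / Real.log 2) := by
      funext q; rw [hR, hX, Real.logb]
    have hval : 1 + M * τh / (c * ph ^ 2 * K ^ 2) = 1 + s₀ := by
      have := hXh; rw [hX] at this; rw [this]
    have hden : HasDerivAt (fun q : ℝ => c * q ^ 2 * K ^ 2) (c * (2 * ph) * K ^ 2) ph := by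
      simpa using (((hasDerivAt_pow 2 ph).const_mul c).mul_const (K ^ 2))
    have hdenne : c * ph ^ 2 * K ^ 2 ≠ 0 := ne_of_gt hApos
    have hu : HasDerivAt (fun q => 1 + M * τh / (c * q ^ 2 * K ^ 2))
        ((0 * (c * ph ^ 2 * K ^ 2) - (M * τh) * (c * (2 * ph) * K ^ 2)) / (c * ph ^ 2 * K ^ 2) ^ 2)
        ph := by
      exact ((hasDerivAt_const ph (M * τh)).div hden hdenne).const_add 1
    have h2 : HasDerivAt Real.log (1 + s₀)⁻¹ (1 + M * τh / (c * ph ^ 2 * K ^ 2)) := by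
      rw [hval]; exact Real.hasDerivAt_log h1sne
    have h3 : HasDerivAt (fun q => Real.log (1 + M * τh / (c * q ^ 2 * K ^ 2)))
        ((1 + s₀)⁻¹ * ((0 * (c * ph ^ 2 * K ^ 2) - (M * τh) * (c * (2 * ph) * K ^ 2)) / (c * ph ^ 2 * K ^ 2) ^ 2))
        ph := by have := h2.comp ph hu; exact this
    have hq : HasDerivAt (fun q : ℝ => q * K * (τu - τh)) (K * (τu - τh)) ph := by
      simpa using ((hasDerivAt_id ph).mul_const K).mul_const (τu - τh)
    have h5 := hq.mul (h3.div_const (Real.log 2))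
    have h6 : deriv (fun q => R τh q) ph = K * (τu - τh) *
          (Real.log (1 + M * τh / (c * ph ^ 2 * K ^ 2)) / Real.log 2)
        + ph * K * (τu - τh) *
          ((1 + s₀)⁻¹ * ((0 * (c * ph ^ 2 * K ^ 2) - (M * τh) * (c * (2 * ph) * K ^ 2)) / (c * ph ^ 2 * K ^ 2) ^ 2) / Real.log 2) := by
      rw [hfun]
      exact h5.deriv
    rw [h6, hval, hs₀eq]
    have hXeq : M * τh / (c * ph ^ 2 * K ^ 2) = s₀ := by
      have := hXh; rw [hX] at this; exact this
    have hphne : ph ≠ 0 := ne_of_gt hphpos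
    have key : (M * τh) * (c * (2 * ph) * K ^ 2) = 2 * s₀ * (c * ph ^ 2 * K ^ 2) ^ 2 / ph := by
      rw [eq_div_iff hphne]
      field_simp at hXeq
      rw [hXeq]; ring
    rw [key]
    field_simp
    ring
end

section
/- Fix τ > 0 and constants A, B, C > 0, let s₀ be the unique positive solution of ln(1+x) = 2x/(1+x), and define P(M, τ) = √(τ·M/(3·s₀·B)) and S(M, τ) = (M·τ/3) / (A·M·P(M, τ) + B·P(M, τ)² + C·P(M, τ)·τ/3) for M > 0. Then lim_{M→∞} S(M, τ)·√(M/τ) = √(s₀·B/3)/A. In particular, for fixed uplink slot length the heuristic SINR decays like √(τ/M) as the number of antennas M grows. -/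
/-- With `P(M, τ) = √(τ M/(3 s₀ B))` and
`S(M, τ) = (M τ/3) / (A M P + B P² + C P τ/3)`, for fixed `τ > 0` one has
`S(M, τ) · √(M/τ) → √(s₀ B / 3)/A` as `M → ∞`: the heuristic SINR decays like
`√(τ/M)`. -/
theorem stmt8 (A B C τ : ℝ) (hA : 0 < A) (hB : 0 < B) (hC : 0 < C) (hτ : 0 < τ)
    (s₀ : ℝ) (hs₀pos : 0 < s₀) (hs₀eq : Real.log (1 + s₀) = 2 * s₀ / (1 + s₀))
    (P S : ℝ → ℝ → ℝ)
    (hP : ∀ M t : ℝ, P M t = Real.sqrt (t * M / (3 * s₀ * B)))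
    (hS : ∀ M t : ℝ, S M t =
      (M * t / 3) / (A * M * P M t + B * (P M t) ^ 2 + C * P M t * t / 3)) :
    Filter.Tendsto (fun M : ℝ => S M τ * Real.sqrt (M / τ)) Filter.atTop
      (nhds (Real.sqrt (s₀ * B / 3) / A)) := by
  set k := Real.sqrt (τ / (3 * s₀ * B)) with hk
  set c := Real.sqrt (s₀ * B / 3) with hc
  have hkpos : 0 < k := Real.sqrt_pos.mpr (by positivity)
  have hcpos : 0 < c := Real.sqrt_pos.mpr (by positivity)
  have htpos : 0 < Real.sqrt τ := Real.sqrt_pos.mpr hτ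
  have ht2 : Real.sqrt τ ^ 2 = τ := Real.sq_sqrt hτ.le
  have hck : Real.sqrt τ = 3 * (c * k) := by
    rw [hc, hk, ← Real.sqrt_mul (by positivity)]
    rw [show s₀ * B / 3 * (τ / (3 * s₀ * B)) = τ / 9 by field_simp; ring]
    rw [show (9 : ℝ) = 3 ^ 2 by norm_num, Real.sqrt_div hτ.le,
      Real.sqrt_sq (by norm_num : (0:ℝ) ≤ 3)]
    ring
  have heq : ∀ᶠ M in Filter.atTop,
      S M τ * Real.sqrt (M / τ)
        = c / (A + B * k / Real.sqrt M + C * τ / (3 * M)) := by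
    filter_upwards [Filter.eventually_gt_atTop 0] with M hM
    have hsM : 0 < Real.sqrt M := Real.sqrt_pos.mpr hM
    have hs2 : Real.sqrt M ^ 2 = M := Real.sq_sqrt hM.le
    have hPM : P M τ = k * Real.sqrt M := by
      rw [hP, hk, ← Real.sqrt_mul (by positivity)]
      congr 1
      field_simp
    have hsqdiv : Real.sqrt (M / τ) = Real.sqrt M / Real.sqrt τ := by
      rw [Real.sqrt_div hM.le]
    have hden1 : A * M * (k * Real.sqrt M) + B * (k * Real.sqrt M) ^ 2
        + C * (k * Real.sqrt M) * τ / 3 ≠ 0 := by positivity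
    have hden2 : A + B * k / Real.sqrt M + C * τ / (3 * M) ≠ 0 := by positivity
    have hτ9 : τ = 9 * c ^ 2 * k ^ 2 := by rw [← ht2, hck]; ring
    rw [hS, hPM, hsqdiv]
    field_simp
    rw [hck]
    linear_combination (3 * M * (A * Real.sqrt M + k * B) + τ * Real.sqrt M * C) * hτ9
      - (27 * B * c ^ 2 * k ^ 3) * hs2
  refine Filter.Tendsto.congr' (Filter.EventuallyEq.symm heq) ?_
  have h1 : Filter.Tendsto (fun M : ℝ => B * k / Real.sqrt M) Filter.atTop (nhds 0) := by
    have hsq : Filter.Tendsto Real.sqrt Filter.atTop Filter.atTop := by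
      refine Filter.tendsto_atTop_atTop_of_monotone (fun x y h => Real.sqrt_le_sqrt h) ?_
      intro b
      exact ⟨(max b 0) ^ 2, by rw [Real.sqrt_sq (le_max_right b 0)]; exact le_max_left b 0⟩
    have h := (Filter.Tendsto.inv_tendsto_atTop hsq).const_mul (B * k)
    rw [mul_zero] at h
    exact h.congr fun M => by simp [Pi.inv_apply, div_eq_mul_inv]
  have h2 : Filter.Tendsto (fun M : ℝ => C * τ / (3 * M)) Filter.atTop (nhds 0) := by
    have h := (tendsto_inv_atTop_zero (𝕜 := ℝ)).const_mul (C * τ / 3)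
    rw [mul_zero] at h
    exact h.congr fun M => by ring
  have hden : Filter.Tendsto (fun M : ℝ => A + B * k / Real.sqrt M + C * τ / (3 * M))
      Filter.atTop (nhds A) := by
    have h := ((tendsto_const_nhds (x := A) (f := (Filter.atTop : Filter ℝ))).add h1).add h2
    simpa using h
  exact (tendsto_const_nhds (x := c)).div hden hA.ne'
end

section
/- Fix M > 0 and constants A, B, C > 0, let s₀ be the unique positive solution of ln(1+x) = 2x/(1+x), and define P(M, τ) = √(τ·M/(3·s₀·B)) and S(M, τ) = (M·τ/3) / (A·M·P(M, τ) + B·P(M, τ)² + C·P(M, τ)·τ/3) for τ > 0. Then lim_{τ→∞} S(M, τ)·√(τ/M) = √(3·s₀·B)/C. In particular, for a fixed number of antennas the heuristic SINR decays like √(M/τ) as the uplink slot length τ grows. -/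
/-- With `P(M, τ) = √(τ M/(3 s₀ B))` and
`S(M, τ) = (M τ/3) / (A M P + B P² + C P τ/3)`, for fixed `M > 0` one has
`S(M, τ) · √(τ/M) → √(3 s₀ B)/C` as `τ → ∞`: the heuristic SINR decays like
`√(M/τ)`. -/
theorem stmt9 (A B C M : ℝ) (hA : 0 < A) (hB : 0 < B) (hC : 0 < C) (hM : 0 < M)
    (s₀ : ℝ) (hs₀pos : 0 < s₀) (hs₀eq : Real.log (1 + s₀) = 2 * s₀ / (1 + s₀))
    (P S : ℝ → ℝ → ℝ)
    (hP : ∀ m t : ℝ, P m t = Real.sqrt (t * m / (3 * s₀ * B)))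
    (hS : ∀ m t : ℝ, S m t =
      (m * t / 3) / (A * m * P m t + B * (P m t) ^ 2 + C * P m t * t / 3)) :
    Filter.Tendsto (fun τ : ℝ => S M τ * Real.sqrt (τ / M)) Filter.atTop
      (nhds (Real.sqrt (3 * s₀ * B) / C)) := by
  set k : ℝ := Real.sqrt (M / (3 * s₀ * B)) with hk_def
  have hkpos : 0 < k := Real.sqrt_pos.2 (by positivity)
  have hMs : 0 < Real.sqrt M := Real.sqrt_pos.2 hM
  have hk_mul : k * Real.sqrt (3 * s₀ * B) = Real.sqrt M := by
    rw [hk_def, ← Real.sqrt_mul (by positivity)]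
    rw [div_mul_cancel₀ _ (by positivity : (3 * s₀ * B) ≠ 0)]
  have hsB : 0 < Real.sqrt (3 * s₀ * B) := Real.sqrt_pos.2 (by positivity)
  -- the limit of the simplified function
  have hden : Filter.Tendsto
      (fun τ : ℝ => A * M * k * τ⁻¹ + B * k ^ 2 * (Real.sqrt τ)⁻¹ + C * k / 3)
      Filter.atTop (nhds (0 + 0 + C * k / 3)) := by
    refine Filter.Tendsto.add (Filter.Tendsto.add ?_ ?_) tendsto_const_nhds
    · simpa using tendsto_inv_atTop_zero.const_mul (A * M * k)
    · have hsq : Filter.Tendsto Real.sqrt Filter.atTop Filter.atTop :=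
        Filter.tendsto_atTop_atTop.2 fun b => ⟨b ^ 2, fun a ha => by
          calc b ≤ |b| := le_abs_self b
          _ = Real.sqrt (b ^ 2) := (Real.sqrt_sq_eq_abs b).symm
          _ ≤ Real.sqrt a := Real.sqrt_le_sqrt ha⟩
      simpa using (hsq.inv_tendsto_atTop).const_mul (B * k ^ 2)
  have hg : Filter.Tendsto
      (fun τ : ℝ => (Real.sqrt M / 3) /
        (A * M * k * τ⁻¹ + B * k ^ 2 * (Real.sqrt τ)⁻¹ + C * k / 3))
      Filter.atTop (nhds ((Real.sqrt M / 3) / (0 + 0 + C * k / 3))) :=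
    Filter.Tendsto.div tendsto_const_nhds hden (by positivity)
  have hval : (Real.sqrt M / 3) / (0 + 0 + C * k / 3)
      = Real.sqrt (3 * s₀ * B) / C := by
    rw [zero_add, zero_add, ← hk_mul]
    field_simp
  rw [← hval]
  refine Filter.Tendsto.congr' ?_ hg
  filter_upwards [Filter.eventually_gt_atTop (0 : ℝ)] with τ hτ
  have hsτ : 0 < Real.sqrt τ := Real.sqrt_pos.2 hτ
  have hττ : Real.sqrt τ * Real.sqrt τ = τ := Real.mul_self_sqrt hτ.le
  have hPτ : P M τ = Real.sqrt τ * k := by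
    rw [hP, hk_def, ← Real.sqrt_mul hτ.le, mul_div_assoc]
  have hdiv : Real.sqrt (τ / M) = Real.sqrt τ / Real.sqrt M :=
    Real.sqrt_div hτ.le M
  have hd1 : 0 < A * M * (Real.sqrt τ * k) + B * (Real.sqrt τ * k) ^ 2
      + C * (Real.sqrt τ * k) * τ / 3 := by positivity
  have hd2 : 0 < A * M * k * τ⁻¹ + B * k ^ 2 * (Real.sqrt τ)⁻¹ + C * k / 3 := by
    positivity
  rw [hS, hPτ, hdiv]
  set u := Real.sqrt τ with hu
  rw [← hττ]
  have hd1' : 0 < A * M * (u * k) + B * (u * k) ^ 2 + C * (u * k) * (u * u) / 3 := by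
    positivity
  have hd2' : 0 < A * M * k * (u * u)⁻¹ + B * k ^ 2 * u⁻¹ + C * k / 3 := by
    positivity
  field_simp
  linear_combination (1) *
    Real.mul_self_sqrt hM.le
end

section
/- Fix τ > 0 and constants A, B, C > 0, let s₀ be the unique positive solution of ln(1+x) = 2x/(1+x), define P(M, τ) = √(τ·M/(3·s₀·B)), S(M, τ) = (M·τ/3) / (A·M·P(M, τ) + B·P(M, τ)² + C·P(M, τ)·τ/3), and the heuristic sum rate R_a(M, τ) = (2/3)·P(M, τ)·log₂(1 + S(M, τ)). Then lim_{M→∞} R_a(M, τ)/τ = 2/(9·A·ln 2). In particular, for fixed uplink slot length the heuristic sum rate tends to a quantity proportional to τ as M → ∞. -/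
/-- For the heuristic sum rate `R_a(M, τ) = (2/3) P(M, τ) log₂(1 + S(M, τ))`, with
`P(M, τ) = √(τ M/(3 s₀ B))` and `S(M, τ) = (M τ/3)/(A M P + B P² + C P τ/3)`,
for fixed `τ > 0` one has `R_a(M, τ)/τ → 2/(9 A ln 2)` as `M → ∞`; i.e. the
heuristic sum rate tends to a quantity proportional to `τ`. -/
theorem stmt11 (A B C τ : ℝ) (hA : 0 < A) (hB : 0 < B) (hC : 0 < C) (hτ : 0 < τ)
    (s₀ : ℝ) (hs₀pos : 0 < s₀) (hs₀eq : Real.log (1 + s₀) = 2 * s₀ / (1 + s₀))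
    (P S Ra : ℝ → ℝ → ℝ)
    (hP : ∀ m t : ℝ, P m t = Real.sqrt (t * m / (3 * s₀ * B)))
    (hS : ∀ m t : ℝ, S m t =
      (m * t / 3) / (A * m * P m t + B * (P m t) ^ 2 + C * P m t * t / 3))
    (hRa : ∀ m t : ℝ, Ra m t = (2 / 3) * P m t * Real.logb 2 (1 + S m t)) :
    Filter.Tendsto (fun M : ℝ => Ra M τ / τ) Filter.atTop
      (nhds (2 / (9 * A * Real.log 2))) := by
  have hlog2 : (0:ℝ) < Real.log 2 := Real.log_pos (by norm_num)
  set c : ℝ := Real.sqrt (τ / (3 * s₀ * B)) with hc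
  have hcpos : 0 < c := Real.sqrt_pos.2 (by positivity)
  have hPe : ∀ M : ℝ, 0 ≤ M → P M τ = c * Real.sqrt M := by
    intro M hM
    rw [hP, hc, show τ * M / (3 * s₀ * B) = (τ / (3 * s₀ * B)) * M by ring,
      Real.sqrt_mul (by positivity) M]
  have hPpos : ∀ M : ℝ, 0 < M → 0 < P M τ := by
    intro M hM
    rw [hPe M hM.le]
    have := Real.sqrt_pos.2 hM
    positivity
  have hSpos : ∀ M : ℝ, 0 < M → 0 < S M τ := by
    intro M hM
    have hp := hPpos M hM
    rw [hS]
    apply div_pos (by positivity)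
    positivity
  -- P * S
  have hPS : ∀ M : ℝ, 0 < M →
      P M τ * S M τ = (τ / 3) / (A + B * c / Real.sqrt M + C * τ / (3 * M)) := by
    intro M hM
    have hsM : 0 < Real.sqrt M := Real.sqrt_pos.2 hM
    have hp := hPpos M hM
    have hp' := hp
    rw [hPe M hM.le] at hp'
    have hM' : Real.sqrt M * Real.sqrt M = M := Real.mul_self_sqrt hM.le
    have hdenpos : 0 < A * M * P M τ + B * (P M τ) ^ 2 + C * P M τ * τ / 3 := by
      positivity
    have hden2 : 0 < A + B * c / Real.sqrt M + C * τ / (3 * M) := by positivity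
    rw [hS, hPe M hM.le]
    rw [hPe M hM.le] at hdenpos
    field_simp
    linear_combination (-(3*c*B)) * hM'
  -- limit of P*S
  have hsqrt : Filter.Tendsto Real.sqrt Filter.atTop Filter.atTop := by
    have := tendsto_rpow_atTop (by norm_num : (0:ℝ) < 1/2)
    refine this.congr' ?_
    filter_upwards [Filter.eventually_ge_atTop 0] with x hx
    exact (Real.sqrt_eq_rpow x).symm

  have h1 : Filter.Tendsto (fun M : ℝ => B * c / Real.sqrt M) Filter.atTop (nhds 0) :=
    Filter.Tendsto.div_atTop tendsto_const_nhds hsqrt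
  have h2 : Filter.Tendsto (fun M : ℝ => C * τ / (3 * M)) Filter.atTop (nhds 0) :=
    Filter.Tendsto.div_atTop tendsto_const_nhds (Filter.Tendsto.const_mul_atTop (by norm_num) Filter.tendsto_id)
  have hdenlim : Filter.Tendsto (fun M : ℝ => A + B * c / Real.sqrt M + C * τ / (3 * M))
      Filter.atTop (nhds A) := by
    have := ((tendsto_const_nhds : Filter.Tendsto (fun _ : ℝ => A) Filter.atTop (nhds A)).add h1).add h2
    simpa using this
  have hPSlim : Filter.Tendsto (fun M : ℝ => P M τ * S M τ) Filter.atTop (nhds (τ / (3 * A))) := by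
    have : Filter.Tendsto (fun M : ℝ => (τ / 3) / (A + B * c / Real.sqrt M + C * τ / (3 * M)))
        Filter.atTop (nhds ((τ / 3) / A)) :=
      Filter.Tendsto.div tendsto_const_nhds hdenlim hA.ne'
    rw [show τ / 3 / A = τ / (3 * A) by ring] at this
    refine this.congr' ?_
    filter_upwards [Filter.eventually_gt_atTop 0] with M hM
    exact (hPS M hM).symm
  -- P → ∞
  have hPatTop : Filter.Tendsto (fun M : ℝ => P M τ) Filter.atTop Filter.atTop := by
    have : Filter.Tendsto (fun M : ℝ => c * Real.sqrt M) Filter.atTop Filter.atTop :=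
      Filter.Tendsto.const_mul_atTop hcpos hsqrt
    refine this.congr' ?_
    filter_upwards [Filter.eventually_ge_atTop 0] with M hM
    exact (hPe M hM).symm
  -- S → 0
  have hSlim : Filter.Tendsto (fun M : ℝ => S M τ) Filter.atTop (nhds 0) := by
    have := Filter.Tendsto.div_atTop hPSlim hPatTop
    refine this.congr' ?_
    filter_upwards [Filter.eventually_gt_atTop 0] with M hM
    field_simp [(hPpos M hM).ne']
  have hSne : ∀ᶠ M : ℝ in Filter.atTop, S M τ ≠ 0 := by
    filter_upwards [Filter.eventually_gt_atTop 0] with M hM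
    exact (hSpos M hM).ne'
  have hSlim' : Filter.Tendsto (fun M : ℝ => S M τ) Filter.atTop (nhdsWithin 0 {x | x ≠ 0}) := by
    rw [tendsto_nhdsWithin_iff]
    exact ⟨hSlim, hSne⟩
  -- log(1+x)/x → 1
  have hderiv : HasDerivAt (fun x : ℝ => Real.log (1 + x)) 1 0 := by
    have h1 : HasDerivAt (fun x : ℝ => 1 + x) 1 0 := by
      simpa using (hasDerivAt_id (0:ℝ)).const_add 1
    have h2 := (Real.hasDerivAt_log (by norm_num : (1:ℝ) + 0 ≠ 0)).comp 0 h1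
    exact (by simpa using h2 : HasDerivAt (Real.log ∘ fun x : ℝ => 1 + x) 1 0)
  have hslope : Filter.Tendsto (fun x : ℝ => Real.log (1 + x) / x)
      (nhdsWithin 0 {x | x ≠ 0}) (nhds 1) := by
    have := hasDerivAt_iff_tendsto_slope.1 hderiv
    refine this.congr ?_
    intro x
    simp [slope_def_field, div_eq_div_iff]
  have hloglim : Filter.Tendsto (fun M : ℝ => Real.log (1 + S M τ) / S M τ)
      Filter.atTop (nhds 1) := hslope.comp hSlim'
  -- combine
  have hmain : Filter.Tendsto
      (fun M : ℝ => (2 / (3 * τ * Real.log 2)) * (P M τ * S M τ) * (Real.log (1 + S M τ) / S M τ))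
      Filter.atTop (nhds (2 / (9 * A * Real.log 2))) := by
    have := (((tendsto_const_nhds : Filter.Tendsto (fun _ : ℝ => 2 / (3 * τ * Real.log 2)) Filter.atTop (nhds (2 / (3 * τ * Real.log 2)))).mul hPSlim).mul hloglim)
    have heq : 2 / (3 * τ * Real.log 2) * (τ / (3 * A)) * 1 = 2 / (9 * A * Real.log 2) := by
      field_simp
      ring
    rw [heq] at this
    exact this
  refine hmain.congr' ?_
  filter_upwards [Filter.eventually_gt_atTop 0] with M hM
  have hs := hSpos M hM
  rw [hRa]
  field_simp
  have hlb : Real.logb 2 (1 + S M τ) * Real.log 2 = Real.log (1 + S M τ) := by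
    rw [Real.logb]; field_simp
  linear_combination (-(P M τ)) * hlb
end

section
/- Fix M > 0 and constants A, B, C > 0, let s₀ be the unique positive solution of ln(1+x) = 2x/(1+x), define P(M, τ) = √(τ·M/(3·s₀·B)), S(M, τ) = (M·τ/3) / (A·M·P(M, τ) + B·P(M, τ)² + C·P(M, τ)·τ/3), and R_a(M, τ) = (2/3)·P(M, τ)·log₂(1 + S(M, τ)). Then lim_{τ→∞} R_a(M, τ) = 2·M/(3·C·ln 2). In particular, for a fixed number of antennas the heuristic sum rate tends to a quantity proportional to M as τ → ∞. -/
open Filter Real Topology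

lemma aux_sqrt_atTop : Filter.Tendsto Real.sqrt Filter.atTop Filter.atTop := by
  apply Filter.tendsto_atTop_atTop.2
  intro b
  refine ⟨b ^ 2, fun a ha => ?_⟩
  calc b ≤ |b| := le_abs_self b
    _ = Real.sqrt (b ^ 2) := (Real.sqrt_sq_eq_abs b).symm
    _ ≤ Real.sqrt a := Real.sqrt_le_sqrt ha

/-- `log(1+x)/x → 1` as `x → 0` within `{0}ᶜ`. -/
lemma aux_log_slope :
    Filter.Tendsto (fun x : ℝ => Real.log (1 + x) / x) (nhdsWithin 0 {0}ᶜ) (nhds 1) := by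
  have hd : HasDerivAt (fun x : ℝ => Real.log (1 + x)) 1 0 := by
    have h := (Real.hasDerivAt_log (by norm_num : (1:ℝ) + 0 ≠ 0)).comp 0
      ((hasDerivAt_id (0:ℝ)).const_add 1)
    simpa [Function.comp_def] using h
  rw [hasDerivAt_iff_tendsto_slope] at hd
  refine hd.congr fun x => ?_
  simp [slope_def_field, div_eq_inv_mul]

/-- For the heuristic sum rate `R_a(M, τ) = (2/3) P(M, τ) log₂(1 + S(M, τ))`, with
`P(M, τ) = √(τ M/(3 s₀ B))` and `S(M, τ) = (M τ/3)/(A M P + B P² + C P τ/3)`,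
for fixed `M > 0` one has `R_a(M, τ) → 2 M/(3 C ln 2)` as `τ → ∞`; i.e. the
heuristic sum rate tends to a quantity proportional to `M`. -/
theorem stmt12 (A B C M : ℝ) (hA : 0 < A) (hB : 0 < B) (hC : 0 < C) (hM : 0 < M)
    (s₀ : ℝ) (hs₀pos : 0 < s₀) (hs₀eq : Real.log (1 + s₀) = 2 * s₀ / (1 + s₀))
    (P S Ra : ℝ → ℝ → ℝ)
    (hP : ∀ m t : ℝ, P m t = Real.sqrt (t * m / (3 * s₀ * B)))
    (hS : ∀ m t : ℝ, S m t =
      (m * t / 3) / (A * m * P m t + B * (P m t) ^ 2 + C * P m t * t / 3))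
    (hRa : ∀ m t : ℝ, Ra m t = (2 / 3) * P m t * Real.logb 2 (1 + S m t)) :
    Filter.Tendsto (fun τ : ℝ => Ra M τ) Filter.atTop
      (nhds (2 * M / (3 * C * Real.log 2))) := by
  set k : ℝ := M / (3 * s₀ * B) with hkdef
  have hk0 : 0 < k := by positivity
  have hPeq : ∀ t : ℝ, P M t = Real.sqrt (k * t) := by
    intro t; rw [hP]; congr 1; field_simp [hkdef]; rw [hkdef]; field_simp
  have hPpos : ∀ t : ℝ, 0 < t → 0 < P M t := by
    intro t ht
    rw [hPeq]
    exact Real.sqrt_pos.2 (by positivity)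
  -- P tends to atTop
  have hPtop : Filter.Tendsto (fun t : ℝ => P M t) Filter.atTop Filter.atTop := by
    have h1 : Filter.Tendsto (fun t : ℝ => k * t) Filter.atTop Filter.atTop :=
      Filter.Tendsto.const_mul_atTop hk0 tendsto_id
    exact (aux_sqrt_atTop.comp h1).congr fun t => by simp [hPeq]
  -- positivity of S for t > 0
  have hDpos : ∀ t : ℝ, 0 < t →
      0 < A * M * P M t + B * (P M t) ^ 2 + C * P M t * t / 3 := by
    intro t ht
    have hp : 0 < P M t := hPpos t ht
    have h1 : 0 < A * M * P M t := mul_pos (mul_pos hA hM) hp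
    have h2 : 0 < B * (P M t) ^ 2 := mul_pos hB (pow_pos hp 2)
    have h3 : 0 < C * P M t * t / 3 :=
      div_pos (mul_pos (mul_pos hC hp) ht) (by norm_num)
    linarith
  have hSpos : ∀ t : ℝ, 0 < t → 0 < S M t := by
    intro t ht
    rw [hS]
    exact div_pos (by positivity) (hDpos t ht)
  -- key formula for P * S for t > 0
  have hkey : ∀ t : ℝ, 0 < t →
      P M t * S M t = M / (C + 3 * A * M / t + 3 * B * Real.sqrt k / Real.sqrt t) := by
    intro t ht
    have hsplit : P M t = Real.sqrt k * Real.sqrt t := by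
      rw [hPeq, Real.sqrt_mul hk0.le]
    rw [hS, hsplit]
    set u := Real.sqrt k with hu
    set v := Real.sqrt t with hv
    have hu0 : 0 < u := Real.sqrt_pos.2 hk0
    have hv0 : 0 < v := Real.sqrt_pos.2 ht
    have hvv : v * v = t := Real.mul_self_sqrt ht.le
    have hE : 0 < C + 3 * A * M / t + 3 * B * u / v := by positivity
    have hD : 0 < A * M * (u * v) + B * (u * v) ^ 2 + C * (u * v) * t / 3 := by positivity
    rw [← hvv] at hD hE ⊢
    field_simp
    ring
  -- limit of P * S
  have hinv : Filter.Tendsto (fun t : ℝ => 3 * A * M / t) Filter.atTop (nhds 0) :=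
    Filter.Tendsto.div_atTop tendsto_const_nhds tendsto_id
  have hinv2 : Filter.Tendsto (fun t : ℝ => 3 * B * Real.sqrt k / Real.sqrt t)
      Filter.atTop (nhds 0) :=
    Filter.Tendsto.div_atTop tendsto_const_nhds aux_sqrt_atTop
  have hEden : Filter.Tendsto
      (fun t : ℝ => C + 3 * A * M / t + 3 * B * Real.sqrt k / Real.sqrt t)
      Filter.atTop (nhds C) := by
    have := (tendsto_const_nhds (x := C)).add hinv |>.add hinv2
    simpa using this
  have hPS : Filter.Tendsto (fun t : ℝ => P M t * S M t) Filter.atTop (nhds (M / C)) := by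
    have h := (tendsto_const_nhds (x := M)).div hEden hC.ne'
    refine h.congr' ?_
    filter_upwards [eventually_gt_atTop 0] with t ht
    exact (hkey t ht).symm
  -- S tends to 0
  have hS0 : Filter.Tendsto (fun t : ℝ => S M t) Filter.atTop (nhds 0) := by
    have h := hPS.div_atTop hPtop
    refine h.congr' ?_
    filter_upwards [eventually_gt_atTop 0] with t ht
    rw [mul_comm, mul_div_assoc, div_self (hPpos t ht).ne', mul_one]
  -- S tends to 0 within {0}ᶜ
  have hS0' : Filter.Tendsto (fun t : ℝ => S M t) Filter.atTop (nhdsWithin 0 {0}ᶜ) := by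
    rw [tendsto_nhdsWithin_iff]
    refine ⟨hS0, ?_⟩
    filter_upwards [eventually_gt_atTop 0] with t ht
    exact (hSpos t ht).ne'
  have hg : Filter.Tendsto (fun t : ℝ => Real.log (1 + S M t) / S M t)
      Filter.atTop (nhds 1) := aux_log_slope.comp hS0'
  -- assemble
  have hlog2 : Real.log 2 ≠ 0 := by
    have := Real.log_pos (by norm_num : (1:ℝ) < 2)
    linarith
  have hmain : Filter.Tendsto
      (fun t : ℝ => (2 / (3 * Real.log 2)) * (P M t * S M t) *
        (Real.log (1 + S M t) / S M t))
      Filter.atTop (nhds ((2 / (3 * Real.log 2)) * (M / C) * 1)) :=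
    ((tendsto_const_nhds.mul hPS).mul hg)
  have hval : (2 / (3 * Real.log 2)) * (M / C) * 1 = 2 * M / (3 * C * Real.log 2) := by
    field_simp
  rw [← hval]
  refine hmain.congr' ?_
  filter_upwards [eventually_gt_atTop 0] with t ht
  have hSne : S M t ≠ 0 := (hSpos t ht).ne'
  rw [hRa, Real.logb, div_eq_mul_inv]
  field_simp
end

section
/- Let A, B, C, λ > 0, let s₀ be the unique positive solution of ln(1+x) = 2x/(1+x), define P(M, τ) = √(τ·M/(3·s₀·B)), S(M, τ) = (M·τ/3) / (A·M·P(M, τ) + B·P(M, τ)² + C·P(M, τ)·τ/3), and R_a(M, τ) = (2/3)·P(M, τ)·log₂(1 + S(M, τ)). Then for every τ > 0, R_a(λτ, τ) = τ·√(λ/(3·s₀·B))·(2/3)·log₂(1 + S(λτ, τ)), where S(λτ, τ) does not depend on τ; consequently R_a(λτ, τ)/√((λτ)·τ) is independent of τ, i.e., the heuristic sum rate scales as √(M·τ_u) when M and τ_u grow proportionally. -/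
/-- For the heuristic sum rate `R_a(M, τ) = (2/3) P(M, τ) log₂(1 + S(M, τ))`, with
`P(M, τ) = √(τ M/(3 s₀ B))` and `S(M, τ) = (M τ/3)/(A M P + B P² + C P τ/3)`,
when `M = λ τ` one has `R_a(λτ, τ) = τ √(λ/(3 s₀ B)) (2/3) log₂(1 + S(λτ, τ))`,
where `S(λτ, τ)` does not depend on `τ`; consequently `R_a(λτ, τ)/√((λτ)·τ)` is
independent of `τ`: the heuristic sum rate scales as `√(M τ_u)`. -/
theorem stmt13 (A B C lam : ℝ) (hA : 0 < A) (hB : 0 < B) (hC : 0 < C) (hlam : 0 < lam)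
    (s₀ : ℝ) (hs₀pos : 0 < s₀) (hs₀eq : Real.log (1 + s₀) = 2 * s₀ / (1 + s₀))
    (P S Ra : ℝ → ℝ → ℝ)
    (hP : ∀ m t : ℝ, P m t = Real.sqrt (t * m / (3 * s₀ * B)))
    (hS : ∀ m t : ℝ, S m t =
      (m * t / 3) / (A * m * P m t + B * (P m t) ^ 2 + C * P m t * t / 3))
    (hRa : ∀ m t : ℝ, Ra m t = (2 / 3) * P m t * Real.logb 2 (1 + S m t)) :
    (∀ τ : ℝ, 0 < τ →
      Ra (lam * τ) τ =
        τ * Real.sqrt (lam / (3 * s₀ * B)) * (2 / 3) * Real.logb 2 (1 + S (lam * τ) τ)) ∧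
    (∀ τ₁ τ₂ : ℝ, 0 < τ₁ → 0 < τ₂ → S (lam * τ₁) τ₁ = S (lam * τ₂) τ₂) ∧
    ∀ τ₁ τ₂ : ℝ, 0 < τ₁ → 0 < τ₂ →
      Ra (lam * τ₁) τ₁ / Real.sqrt ((lam * τ₁) * τ₁) =
        Ra (lam * τ₂) τ₂ / Real.sqrt ((lam * τ₂) * τ₂) := by
  set k : ℝ := Real.sqrt (lam / (3 * s₀ * B)) with hk
  have hkpos : 0 < k := Real.sqrt_pos.2 (by positivity)
  have hPk : ∀ τ : ℝ, 0 < τ → P (lam * τ) τ = τ * k := by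
    intro τ hτ
    rw [hP]
    have : τ * (lam * τ) / (3 * s₀ * B) = τ ^ 2 * (lam / (3 * s₀ * B)) := by
      field_simp
    rw [this, Real.sqrt_mul (sq_nonneg τ), Real.sqrt_sq hτ.le]
  have hSk : ∀ τ : ℝ, 0 < τ →
      S (lam * τ) τ = (lam / 3) / (A * lam * k + B * k ^ 2 + C * k / 3) := by
    intro τ hτ
    rw [hS, hPk τ hτ]
    have hden : 0 < A * lam * k + B * k ^ 2 + C * k / 3 := by positivity
    rw [div_eq_div_iff (by positivity) (by positivity)]
    ring
  refine ⟨fun τ hτ => by rw [hRa, hPk τ hτ]; ring, fun τ₁ τ₂ h1 h2 => by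
    rw [hSk τ₁ h1, hSk τ₂ h2], fun τ₁ τ₂ h1 h2 => ?_⟩
  have hsq : ∀ τ : ℝ, 0 < τ → Real.sqrt ((lam * τ) * τ) = τ * Real.sqrt lam := by
    intro τ hτ
    rw [show (lam * τ) * τ = τ ^ 2 * lam by ring, Real.sqrt_mul (sq_nonneg τ),
      Real.sqrt_sq hτ.le]
  have key : ∀ τ : ℝ, 0 < τ → Ra (lam * τ) τ / Real.sqrt ((lam * τ) * τ) =
      (2 / 3) * k * Real.logb 2 (1 + (lam / 3) / (A * lam * k + B * k ^ 2 + C * k / 3))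
        / Real.sqrt lam := by
    intro τ hτ
    rw [hRa, hPk τ hτ, hSk τ hτ, hsq τ hτ,
      show (2 / 3) * (τ * k) * Real.logb 2 (1 + lam / 3 / (A * lam * k + B * k ^ 2 + C * k / 3))
        = τ * ((2 / 3) * k * Real.logb 2 (1 + lam / 3 / (A * lam * k + B * k ^ 2 + C * k / 3)))
        by ring,
      show τ * Real.sqrt lam = τ * Real.sqrt lam by rfl,
      mul_div_mul_left _ _ hτ.ne']
  rw [key τ₁ h1, key τ₂ h2]
end
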